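/- arXiv:1611.00696 — 5 statements merged into one kernel-verified Lean document; each statement's English description precedes it below -/
import Mathlib

section
/- Range criterion (first part of Proposition 2.1(d), proved in the Appendix): for every f ∈ H, f belongs to ran(A_Θ − z) := {Tu − z·u : u ∈ dom A_Θ} if and only if G_{z̄}* f belongs to ran(Θ − M_z) := {Θφ − M_zφ : φ ∈ dom Θ}. -/
/-- Range criterion (Proposition 2.1(d), first part): `f ∈ ran (A_Θ - z)` if and
only if `G_{z̄}* f ∈ ran (Θ - M_z)`. -/
theorem stmt_1
    {H B : Type*} [NormedAddCommGroup H] [InnerProductSpace ℂ H] [CompleteSpace H]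
    [NormedAddCommGroup B] [InnerProductSpace ℂ B] [CompleteSpace B]
    (domT : Submodule ℂ H) (T : domT →ₗ[ℂ] H) (Γ₁ Γ₂ : domT →ₗ[ℂ] B)
    (z : ℂ)
    -- (i) resolvents of A at z and z̄
    (Rz Rzc : H →L[ℂ] H)
    (hRzMem : ∀ f : H, Rz f ∈ domT)
    (hRzΓ : ∀ f : H, Γ₁ ⟨Rz f, hRzMem f⟩ = 0)
    (hRzEq : ∀ f : H, T ⟨Rz f, hRzMem f⟩ - z • (Rz f) = f)
    (hRzInv : ∀ u : domT, Γ₁ u = 0 → Rz (T u - z • (u : H)) = (u : H))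
    (hRzcMem : ∀ f : H, Rzc f ∈ domT)
    (hRzcΓ : ∀ f : H, Γ₁ ⟨Rzc f, hRzcMem f⟩ = 0)
    (hRzcEq : ∀ f : H, T ⟨Rzc f, hRzcMem f⟩ - (starRingEnd ℂ z) • (Rzc f) = f)
    (hRzcInv : ∀ u : domT, Γ₁ u = 0 →
      Rzc (T u - (starRingEnd ℂ z) • (u : H)) = (u : H))
    -- (ii) the γ-field at z and z̄
    (Gz Gzc : B →L[ℂ] H)
    (hGzMem : ∀ φ : B, Gz φ ∈ domT)
    (hGzEig : ∀ φ : B, T ⟨Gz φ, hGzMem φ⟩ = z • (Gz φ))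
    (hGzΓ : ∀ φ : B, Γ₁ ⟨Gz φ, hGzMem φ⟩ = φ)
    (hGzInv : ∀ u : domT, T u = z • (u : H) → Gz (Γ₁ u) = (u : H))
    (hGzcMem : ∀ φ : B, Gzc φ ∈ domT)
    (hGzcEig : ∀ φ : B, T ⟨Gzc φ, hGzcMem φ⟩ = (starRingEnd ℂ z) • (Gzc φ))
    (hGzcΓ : ∀ φ : B, Γ₁ ⟨Gzc φ, hGzcMem φ⟩ = φ)
    (hGzcInv : ∀ u : domT, T u = (starRingEnd ℂ z) • (u : H) → Gzc (Γ₁ u) = (u : H))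
    -- (iii) the link between Γ₂, the resolvent and the adjoint of the γ-field
    (hΓ₂R : ∀ f : H, Γ₂ ⟨Rz f, hRzMem f⟩ = ContinuousLinearMap.adjoint Gzc f)
    -- the Weyl operator M_z = Γ₂ ∘ G_z
    (M : B → B) (hM : ∀ φ : B, M φ = Γ₂ ⟨Gz φ, hGzMem φ⟩)
    -- the boundary parameter Θ
    (domΘ : Submodule ℂ B) (Θ : domΘ →ₗ[ℂ] B)
    :
    ∀ f : H,
      (∃ u : domT, ∃ hu : Γ₁ u ∈ domΘ,
          Γ₂ u = Θ ⟨Γ₁ u, hu⟩ ∧ T u - z • (u : H) = f) ↔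
      (∃ φ : domΘ, Θ φ - M (φ : B) = ContinuousLinearMap.adjoint Gzc f) := by
  intro f
  constructor
  · rintro ⟨u, hu, hΓ₂u, hf⟩
    refine ⟨⟨Γ₁ u, hu⟩, ?_⟩
    -- w := u - Rz f is a z-eigenvector
    set r : domT := ⟨Rz f, hRzMem f⟩ with hr
    have hTw : T (u - r) = z • ((u - r : domT) : H) := by
      have h1 : T u = f + z • (u : H) := by
        have := hf; linear_combination (norm := module) this
      have h2 : T r = f + z • (Rz f) := by
        have := hRzEq f; linear_combination (norm := module) this
      simp only [map_sub, h1, h2, Submodule.coe_sub, smul_sub]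
      abel
    have hΓw : Γ₁ (u - r) = Γ₁ u := by
      simp [map_sub, hr, hRzΓ f]
    have hGw : Gz (Γ₁ u) = ((u - r : domT) : H) := by
      rw [← hΓw]; exact hGzInv _ hTw
    have hwEq : (⟨Gz (Γ₁ u), hGzMem (Γ₁ u)⟩ : domT) = u - r := Subtype.ext hGw
    have hΓ₂w : Γ₂ (u - r) = M (Γ₁ u) := by
      rw [hM, hwEq]
    have : Γ₂ u - Γ₂ r = M (Γ₁ u) := by rw [← map_sub]; exact hΓ₂w
    rw [hΓ₂u, hr, hΓ₂R f] at this
    have : Θ ⟨Γ₁ u, hu⟩ - M (Γ₁ u) = ContinuousLinearMap.adjoint Gzc f := by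
      linear_combination (norm := module) this
    exact this
  · rintro ⟨φ, hφ⟩
    set u : domT := ⟨Rz f, hRzMem f⟩ + ⟨Gz (φ : B), hGzMem _⟩ with hu
    have hΓ₁u : Γ₁ u = (φ : B) := by
      rw [hu, map_add, hRzΓ f, hGzΓ, zero_add]
    refine ⟨u, by rw [hΓ₁u]; exact φ.2, ?_, ?_⟩
    · have hΓ₂u : Γ₂ u = ContinuousLinearMap.adjoint Gzc f + M (φ : B) := by
        rw [hu, map_add, hΓ₂R f, ← hM]
      have hφ' : (⟨Γ₁ u, by rw [hΓ₁u]; exact φ.2⟩ : domΘ) = φ := Subtype.ext hΓ₁u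
      rw [hΓ₂u, hφ']
      linear_combination (norm := module) hφ.symm
    · have h1 := hRzEq f
      have h2 := hGzEig (φ : B)
      simp only [hu, map_add, Submodule.coe_add, smul_add]
      linear_combination (norm := module) h1 + h2
end

section
/- Invertibility correspondence (Proposition 2.1(a), bijectivity form): assume in addition (iv) that the map u ↦ (Γ₁u, Γ₂u) from dom T to 𝔥 × 𝔥 is surjective. Then A_Θ − z : dom A_Θ → H is a bijection if and only if Θ − M_z : dom Θ → 𝔥 is a bijection. -/
/-- Invertibility correspondence (Proposition 2.1(a), bijectivity form): assuming
additionally that `u ↦ (Γ₁ u, Γ₂ u)` is surjective, `A_Θ - z : dom A_Θ → H` is a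
bijection if and only if `Θ - M_z : dom Θ → 𝔥` is a bijection. -/
theorem stmt_4
    {H B : Type*} [NormedAddCommGroup H] [InnerProductSpace ℂ H] [CompleteSpace H]
    [NormedAddCommGroup B] [InnerProductSpace ℂ B] [CompleteSpace B]
    (domT : Submodule ℂ H) (T : domT →ₗ[ℂ] H) (Γ₁ Γ₂ : domT →ₗ[ℂ] B)
    (z : ℂ)
    -- (i) resolvents of A at z and z̄
    (Rz Rzc : H →L[ℂ] H)
    (hRzMem : ∀ f : H, Rz f ∈ domT)
    (hRzΓ : ∀ f : H, Γ₁ ⟨Rz f, hRzMem f⟩ = 0)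
    (hRzEq : ∀ f : H, T ⟨Rz f, hRzMem f⟩ - z • (Rz f) = f)
    (hRzInv : ∀ u : domT, Γ₁ u = 0 → Rz (T u - z • (u : H)) = (u : H))
    (hRzcMem : ∀ f : H, Rzc f ∈ domT)
    (hRzcΓ : ∀ f : H, Γ₁ ⟨Rzc f, hRzcMem f⟩ = 0)
    (hRzcEq : ∀ f : H, T ⟨Rzc f, hRzcMem f⟩ - (starRingEnd ℂ z) • (Rzc f) = f)
    (hRzcInv : ∀ u : domT, Γ₁ u = 0 →
      Rzc (T u - (starRingEnd ℂ z) • (u : H)) = (u : H))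
    -- (ii) the γ-field at z and z̄
    (Gz Gzc : B →L[ℂ] H)
    (hGzMem : ∀ φ : B, Gz φ ∈ domT)
    (hGzEig : ∀ φ : B, T ⟨Gz φ, hGzMem φ⟩ = z • (Gz φ))
    (hGzΓ : ∀ φ : B, Γ₁ ⟨Gz φ, hGzMem φ⟩ = φ)
    (hGzInv : ∀ u : domT, T u = z • (u : H) → Gz (Γ₁ u) = (u : H))
    (hGzcMem : ∀ φ : B, Gzc φ ∈ domT)
    (hGzcEig : ∀ φ : B, T ⟨Gzc φ, hGzcMem φ⟩ = (starRingEnd ℂ z) • (Gzc φ))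
    (hGzcΓ : ∀ φ : B, Γ₁ ⟨Gzc φ, hGzcMem φ⟩ = φ)
    (hGzcInv : ∀ u : domT, T u = (starRingEnd ℂ z) • (u : H) → Gzc (Γ₁ u) = (u : H))
    -- (iii) the link between Γ₂, the resolvent and the adjoint of the γ-field
    (hΓ₂R : ∀ f : H, Γ₂ ⟨Rz f, hRzMem f⟩ = ContinuousLinearMap.adjoint Gzc f)
    -- the Weyl operator M_z = Γ₂ ∘ G_z
    (M : B → B) (hM : ∀ φ : B, M φ = Γ₂ ⟨Gz φ, hGzMem φ⟩)
    -- the boundary parameter Θ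
    (domΘ : Submodule ℂ B) (Θ : domΘ →ₗ[ℂ] B)
    -- (iv) surjectivity of the combined boundary map
    (hsurj : ∀ p : B × B, ∃ u : domT, Γ₁ u = p.1 ∧ Γ₂ u = p.2) :
    Function.Bijective
        (fun u : {u : domT // ∃ hu : Γ₁ u ∈ domΘ, Γ₂ u = Θ ⟨Γ₁ u, hu⟩} =>
          T u.1 - z • ((u.1 : domT) : H)) ↔
      Function.Bijective (fun φ : domΘ => Θ φ - M (φ : B)) := by
  clear hRzcΓ hRzcEq hRzcInv hGzcEig hGzcΓ hGzcInv hRzcMem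
  -- `Γ₂ ∘ Rz` is surjective (this is where (iv) is used)
  have hAdjSurj : ∀ ψ : B, ∃ f : H, Γ₂ ⟨Rz f, hRzMem f⟩ = ψ := by
    intro ψ
    obtain ⟨w, hw1, hw2⟩ := hsurj (0, ψ)
    have hco : Rz (T w - z • (w : H)) = (w : H) := hRzInv w hw1
    have hsub : (⟨Rz (T w - z • (w : H)), hRzMem _⟩ : domT) = w := Subtype.ext hco
    exact ⟨T w - z • (w : H), by rw [hsub, hw2]⟩
  -- `Gz` is injective on boundary values
  have hGzinj : ∀ χ : B, Gz χ = 0 → χ = 0 := by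
    intro χ h
    have h0 : (⟨Gz χ, hGzMem χ⟩ : domT) = 0 := Subtype.ext (by simpa using h)
    have h1 := hGzΓ χ
    rw [h0, map_zero] at h1
    exact h1.symm
  -- kernel characterization of `T - z`
  have hker : ∀ u : domT, T u = z • (u : H) →
      (⟨Gz (Γ₁ u), hGzMem _⟩ : domT) = u :=
    fun u h => Subtype.ext (hGzInv u h)
  -- evaluation of `Γ₂` on the kernel of `T - z`
  have hMeval : ∀ u : domT, T u = z • (u : H) → Γ₂ u = M (Γ₁ u) := by
    intro u h
    rw [hM]
    exact congrArg Γ₂ (hker u h).symm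
  -- M is subtractive
  have hMsub : ∀ φ ψ : B, M (φ - ψ) = M φ - M ψ := by
    intro φ ψ
    rw [hM, hM, hM]
    have hst : (⟨Gz (φ - ψ), hGzMem _⟩ : domT)
        = ⟨Gz φ, hGzMem _⟩ - ⟨Gz ψ, hGzMem _⟩ := Subtype.ext (by simp)
    rw [hst, map_sub]
  -- the zero element of the domain of A_Θ
  have h0mem : ∃ hu : Γ₁ (0 : domT) ∈ domΘ, Γ₂ (0 : domT) = Θ ⟨Γ₁ (0 : domT), hu⟩ := by
    refine ⟨by simp, ?_⟩
    have h0 : (⟨Γ₁ (0 : domT), by simp⟩ : domΘ) = 0 := Subtype.ext (by simp)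
    rw [h0]; simp
  constructor
  · rintro ⟨Finj, Fsurj⟩
    constructor
    · -- injectivity of Θ - M
      intro φ ψ h
      simp only at h
      have hΘχ : Θ (φ - ψ) = M ((φ : B) - (ψ : B)) := by
        rw [map_sub, hMsub]
        have h2 : Θ φ - Θ ψ - (M (φ : B) - M (ψ : B)) = 0 := by
          rw [show Θ φ - Θ ψ - (M (φ : B) - M (ψ : B))
              = (Θ φ - M (φ : B)) - (Θ ψ - M (ψ : B)) by abel, h, sub_self]
        exact sub_eq_zero.mp h2
      set χ : B := (φ : B) - (ψ : B) with hχ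
      have hχmem : χ ∈ domΘ := sub_mem φ.2 ψ.2
      set u : domT := ⟨Gz χ, hGzMem χ⟩ with hu
      have hΓ₁u : Γ₁ u = χ := hGzΓ χ
      have humem : ∃ hu : Γ₁ u ∈ domΘ, Γ₂ u = Θ ⟨Γ₁ u, hu⟩ := by
        refine ⟨hΓ₁u ▸ hχmem, ?_⟩
        have hsb : (⟨Γ₁ u, hΓ₁u ▸ hχmem⟩ : domΘ) = φ - ψ := Subtype.ext hΓ₁u
        rw [hsb, hΘχ, hM]
      have hF0 : T u - z • ((u : domT) : H) = T (0 : domT) - z • (((0 : domT) : domT) : H) := by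
        rw [hGzEig χ]
        simp
        exact sub_self _
      have := Finj (a₁ := ⟨u, humem⟩) (a₂ := ⟨0, h0mem⟩) hF0
      have hu0 : u = 0 := congrArg Subtype.val this
      have hGz0 : Gz χ = 0 := congrArg Subtype.val hu0
      have hχ0 : χ = 0 := hGzinj χ hGz0
      have : (φ : B) = (ψ : B) := sub_eq_zero.mp hχ0
      exact Subtype.ext this
    · -- surjectivity of Θ - M
      intro ψ
      obtain ⟨f, hf⟩ := hAdjSurj ψ
      obtain ⟨⟨u, humem⟩, hFu⟩ := Fsurj f
      simp only at hFu
      obtain ⟨huΘ, huΓ₂⟩ := humem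
      -- v := u - Rz f lies in the kernel of T - z
      set v : domT := u - ⟨Rz f, hRzMem f⟩ with hv
      have hTv : T v = z • ((v : domT) : H) := by
        have h1 := hRzEq f
        have : T v = T u - T ⟨Rz f, hRzMem f⟩ := map_sub T _ _
        rw [this]
        have hco : ((v : domT) : H) = (u : H) - Rz f := rfl
        rw [hco, smul_sub, sub_eq_sub_iff_sub_eq_sub, hFu, h1]
      have hΓ₁v : Γ₁ v = Γ₁ u := by
        rw [hv, map_sub, hRzΓ, sub_zero]
      have hΓ₂v : Γ₂ v = Θ ⟨Γ₁ u, huΘ⟩ - ψ := by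
        rw [hv, map_sub, hf, huΓ₂]
      have hMv := hMeval v hTv
      rw [hΓ₂v, hΓ₁v] at hMv
      refine ⟨⟨Γ₁ u, huΘ⟩, ?_⟩
      simp only
      rw [← hMv]
      abel
  · rintro ⟨Ginj, Gsurj⟩
    constructor
    · -- injectivity of A_Θ - z
      rintro ⟨u, huΘ, huΓ₂⟩ ⟨w, hwΘ, hwΓ₂⟩ h
      simp only at h
      set v : domT := u - w with hv
      have hTv : T v = z • ((v : domT) : H) := by
        have : T v = T u - T w := map_sub T _ _
        rw [this]
        have hco : ((v : domT) : H) = (u : H) - (w : H) := rfl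
        rw [hco, smul_sub, sub_eq_sub_iff_sub_eq_sub, h]
      have hvΘ : Γ₁ v ∈ domΘ := by
        rw [hv, map_sub]; exact sub_mem huΘ hwΘ
      have hΓ₁vsub : Γ₁ v = Γ₁ u - Γ₁ w := by rw [hv, map_sub]
      have hsb : (⟨Γ₁ v, hvΘ⟩ : domΘ) = ⟨Γ₁ u, huΘ⟩ - ⟨Γ₁ w, hwΘ⟩ :=
        Subtype.ext hΓ₁vsub
      have hΓ₂v : Γ₂ v = Θ ⟨Γ₁ v, hvΘ⟩ := by
        have h1 : Γ₂ v = Γ₂ u - Γ₂ w := by rw [hv, map_sub]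
        rw [h1, huΓ₂, hwΓ₂, ← map_sub]
        exact (congrArg Θ hsb).symm
      have hMv := hMeval v hTv
      have hG0 : Θ ⟨Γ₁ v, hvΘ⟩ - M ((⟨Γ₁ v, hvΘ⟩ : domΘ) : B)
          = Θ (0 : domΘ) - M (((0 : domΘ) : domΘ) : B) := by
        have hc : ((⟨Γ₁ v, hvΘ⟩ : domΘ) : B) = Γ₁ v := rfl
        rw [hc, ← hΓ₂v, hMv, sub_self]
        have hc0 : (((0 : domΘ) : domΘ) : B) = (0 : B) := rfl
        rw [hc0, map_zero]
        have hM0 : M (0 : B) = 0 := by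
          have := hMsub 0 0
          simpa using this
        rw [hM0, sub_self]
      have hveq := Ginj (a₁ := ⟨Γ₁ v, hvΘ⟩) (a₂ := 0) hG0
      have hΓ₁v0 : Γ₁ v = 0 := congrArg Subtype.val hveq
      have hv0 : (v : H) = 0 := by
        have := hGzInv v hTv
        rw [hΓ₁v0, map_zero] at this
        exact this.symm
      have : u = w := by
        have : (u : H) - (w : H) = 0 := hv0
        exact Subtype.ext (sub_eq_zero.mp this)
      exact Subtype.ext this
    · -- surjectivity of A_Θ - z
      intro f
      obtain ⟨φ, hφ⟩ := Gsurj (Γ₂ ⟨Rz f, hRzMem f⟩)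
      simp only at hφ
      set u : domT := ⟨Rz f, hRzMem f⟩ + ⟨Gz (φ : B), hGzMem _⟩ with hu
      have hΓ₁u : Γ₁ u = (φ : B) := by
        rw [hu, map_add, hRzΓ, hGzΓ, zero_add]
      have huΘ : Γ₁ u ∈ domΘ := hΓ₁u ▸ φ.2
      have huΓ₂ : Γ₂ u = Θ ⟨Γ₁ u, huΘ⟩ := by
        have hsb : (⟨Γ₁ u, huΘ⟩ : domΘ) = φ := Subtype.ext hΓ₁u
        rw [hsb, hu, map_add, ← hM, ← hφ]
        abel
      refine ⟨⟨u, huΘ, huΓ₂⟩, ?_⟩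
      simp only
      have hco : ((u : domT) : H) = Rz f + Gz (φ : B) := rfl
      rw [hu, map_add, hco, smul_add]
      rw [show T ⟨Rz f, hRzMem f⟩ + T ⟨Gz (φ : B), hGzMem _⟩ - (z • Rz f + z • Gz (φ : B))
          = (T ⟨Rz f, hRzMem f⟩ - z • Rz f) + (T ⟨Gz (φ : B), hGzMem _⟩ - z • Gz (φ : B)) by abel,
        hRzEq f, hGzEig, sub_self, add_zero]
end

section
/- Explicit inverse of the mode matrices D_m (Section 5): let 0 < r_i < r_e < R be reals, m ≥ 1 an integer, and set s := (r_e/r_i)^m, t := s², T := (R/r_e)^{2m}. Define the 2×2 real matrices D_m := 2m·[[(1/r_i)·1/(t−1), −(1/r_i)·s/(t−1)], [−(1/r_e)·s/(t−1), (1/r_e)·(1/(t−1) − 1/(T−1))]] and E_m := −(1/(2m))·[[r_i·(1 − (r_e²/(r_i·R))^{2m}), r_e·s·(1 − (r_e/R)^{2m})], [r_i·s·(1 − (r_e/R)^{2m}), r_e·(1 − (r_e/R)^{2m})]]. Then D_m·E_m = E_m·D_m = I; in particular D_m is invertible with D_m⁻¹ = E_m. -/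
set_option maxHeartbeats 1600000


/-- Explicit inverse of the mode matrices `D_m` (Section 5): with
`s = (r_e/r_i)^m`, `t = s²`, `TT = (R/r_e)^{2m}`, the matrix `E_m` is a two-sided
inverse of `D_m`; in particular `D_m` is invertible with `D_m⁻¹ = E_m`. -/
theorem stmt_9
    (ri re R : ℝ) (hri : 0 < ri) (hrie : ri < re) (hreR : re < R)
    (m : ℕ) (hm : 1 ≤ m)
    (s t TT : ℝ) (hs : s = (re / ri) ^ m) (ht : t = s ^ 2)
    (hTT : TT = (R / re) ^ (2 * m))
    (D E : Matrix (Fin 2) (Fin 2) ℝ)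
    (hD : D = (2 * (m : ℝ)) •
      !![(1 / ri) * (1 / (t - 1)), -((1 / ri) * (s / (t - 1)));
         -((1 / re) * (s / (t - 1))), (1 / re) * (1 / (t - 1) - 1 / (TT - 1))])
    (hE : E = -(1 / (2 * (m : ℝ))) •
      !![ri * (1 - (re ^ 2 / (ri * R)) ^ (2 * m)), re * s * (1 - (re / R) ^ (2 * m));
         ri * s * (1 - (re / R) ^ (2 * m)), re * (1 - (re / R) ^ (2 * m))]) :
    D * E = 1 ∧ E * D = 1 ∧ IsUnit D ∧ D⁻¹ = E := by
  subst ht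
  have hre : (0:ℝ) < re := hri.trans hrie
  have hR : (0:ℝ) < R := hre.trans hreR
  have hm0 : (0:ℝ) < (m:ℝ) := by exact_mod_cast hm
  have hs1 : 1 < s := by
    rw [hs]; exact one_lt_pow₀ ((one_lt_div hri).mpr hrie) (by omega)
  have ht1 : 1 < s ^ 2 := by nlinarith
  have hTT1 : 1 < TT := by
    rw [hTT]; exact one_lt_pow₀ ((one_lt_div hre).mpr hreR) (by omega)
  have hTT0 : TT ≠ 0 := by positivity
  have htne : s ^ 2 - 1 ≠ 0 := by nlinarith
  have hTTne : TT - 1 ≠ 0 := by linarith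
  have hrine : ri ≠ 0 := ne_of_gt hri
  have hrene : re ≠ 0 := ne_of_gt hre
  have hRne : R ≠ 0 := ne_of_gt hR
  have hmne : (2 * (m:ℝ)) ≠ 0 := by positivity
  have h1 : (re / R) ^ (2 * m) = 1 / TT := by
    rw [hTT, one_div, ← inv_pow, inv_div]
  have h2 : (re ^ 2 / (ri * R)) ^ (2 * m) = s ^ 2 / TT := by
    have : re ^ 2 / (ri * R) = (re / ri) * (re / R) := by
      field_simp
    rw [this, mul_pow, h1, hs, ← pow_mul, mul_comm m 2]
    ring
  have hDE : D * E = 1 := by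
    subst hD hE
    rw [h1, h2, Matrix.smul_mul, Matrix.mul_smul, smul_smul, Matrix.mul_fin_two,
      Matrix.one_fin_two]
    have hsc : (2 * (m:ℝ)) * -(1 / (2 * (m:ℝ))) = -1 := by field_simp
    rw [hsc]
    ext i j
    fin_cases i <;> fin_cases j <;>
      · simp only [Matrix.smul_apply, Matrix.cons_val', Matrix.cons_val_zero,
          Matrix.cons_val_one, Matrix.head_cons, Matrix.empty_val',
          Matrix.cons_val_fin_one, Matrix.head_fin_const, smul_eq_mul,
          Fin.zero_eta, Fin.mk_one, Matrix.of_apply]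
        field_simp
        ring
  have hED : E * D = 1 := mul_eq_one_comm.mp hDE
  have hU : IsUnit D := ⟨⟨D, E, hDE, hED⟩, rfl⟩
  exact ⟨hDE, hED, hU, Matrix.inv_eq_right_inv hDE⟩
end

section
/- Asymptotics of the Neumann datum (Section 5): let 0 < r_e ≤ a < b ≤ R be reals. For an integer m ≥ 1 set I_m := ∫_a^b ((R/s)^m − (s/R)^m)·s ds and J_m := (R/r_e)^m − (r_e/R)^m. Then lim_{m→∞} (m/a²)·(a/r_e)^m·(I_m/J_m) = 1; equivalently, I_m/J_m = (a² + o(1))·(r_e/a)^m/m as m → ∞. -/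
open Filter intervalIntegral

set_option maxHeartbeats 1000000 in
/-- Asymptotics of the Neumann datum (Section 5): with
`I_m = ∫_a^b ((R/s)^m - (s/R)^m)·s ds` and `J_m = (R/r_e)^m - (r_e/R)^m`, one has
`(m/a²)·(a/r_e)^m·(I_m/J_m) → 1` as `m → ∞`, i.e.
`I_m/J_m = (a² + o(1))·(r_e/a)^m/m`. -/
theorem stmt_12
    (re a b R : ℝ) (hre : 0 < re) (hrea : re ≤ a) (hab : a < b) (hbR : b ≤ R)
    (I J : ℕ → ℝ)
    (hI : ∀ m : ℕ, I m = ∫ s in a..b, ((R / s) ^ m - (s / R) ^ m) * s)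
    (hJ : ∀ m : ℕ, J m = (R / re) ^ m - (re / R) ^ m) :
    Filter.Tendsto (fun m : ℕ => ((m : ℝ) / a ^ 2) * (a / re) ^ m * (I m / J m))
      Filter.atTop (nhds 1) := by
  have ha : 0 < a := hre.trans_le hrea
  have hb : 0 < b := ha.trans hab
  have hR : 0 < R := hb.trans_le hbR
  have haR : a < R := hab.trans_le hbR
  have hreR : re < R := lt_of_le_of_lt hrea haR
  -- the explicit asymptotic expression
  set N : ℕ → ℝ := fun m => (-1 + 2 / ((2 : ℝ) - m)) * ((b / a) ^ 2 * (a / b) ^ m - 1)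
      - (1 - 2 / ((m : ℝ) + 2)) * ((b / a) ^ 2 * (a * b / R ^ 2) ^ m - (a ^ 2 / R ^ 2) ^ m)
    with hNdef
  set D : ℕ → ℝ := fun m => 1 - (re ^ 2 / R ^ 2) ^ m with hDdef
  -- limits of the pieces
  have h1 : Tendsto (fun m : ℕ => 2 / ((2 : ℝ) - m)) atTop (nhds 0) := by
    have hb1 : Tendsto (fun m : ℕ => ((m : ℝ) - 2)) atTop atTop :=
      tendsto_atTop_add_const_right _ (-2) tendsto_natCast_atTop_atTop
    have := (tendsto_const_nhds (x := (2:ℝ))).div_atTop hb1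
    have h' : Tendsto (fun m : ℕ => -(2 / ((m : ℝ) - 2))) atTop (nhds (-0)) := this.neg
    rw [neg_zero] at h'
    refine h'.congr fun m => ?_
    rw [← div_neg]; ring_nf
  have h2 : Tendsto (fun m : ℕ => 2 / ((m : ℝ) + 2)) atTop (nhds 0) :=
    (tendsto_const_nhds (x := (2:ℝ))).div_atTop
      (tendsto_atTop_add_const_right _ 2 tendsto_natCast_atTop_atTop)
  have hg1 : Tendsto (fun m : ℕ => (a / b) ^ m) atTop (nhds 0) :=
    tendsto_pow_atTop_nhds_zero_of_lt_one (by positivity) ((div_lt_one hb).2 hab)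
  have hg2 : Tendsto (fun m : ℕ => (a * b / R ^ 2) ^ m) atTop (nhds 0) := by
    refine tendsto_pow_atTop_nhds_zero_of_lt_one (by positivity) ?_
    rw [div_lt_one (by positivity)]; nlinarith
  have hg3 : Tendsto (fun m : ℕ => (a ^ 2 / R ^ 2) ^ m) atTop (nhds 0) := by
    refine tendsto_pow_atTop_nhds_zero_of_lt_one (by positivity) ?_
    rw [div_lt_one (by positivity)]; nlinarith
  have hg4 : Tendsto (fun m : ℕ => (re ^ 2 / R ^ 2) ^ m) atTop (nhds 0) := by
    refine tendsto_pow_atTop_nhds_zero_of_lt_one (by positivity) ?_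
    rw [div_lt_one (by positivity)]; nlinarith
  have hNlim : Tendsto N atTop (nhds 1) := by
    have : Tendsto N atTop (nhds
        ((-1 + 0) * ((b / a) ^ 2 * 0 - 1) - (1 - 0) * ((b / a) ^ 2 * 0 - 0))) := by
      exact ((tendsto_const_nhds.add h1).mul
          ((tendsto_const_nhds.mul hg1).sub tendsto_const_nhds)).sub
        ((tendsto_const_nhds.sub h2).mul ((tendsto_const_nhds.mul hg2).sub hg3))
    simpa using this
  have hDlim : Tendsto D atTop (nhds 1) := by
    have : Tendsto D atTop (nhds (1 - 0)) := tendsto_const_nhds.sub hg4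
    simpa using this
  have hlim : Tendsto (fun m => N m / D m) atTop (nhds 1) := by
    have h := hNlim.div hDlim one_ne_zero; rw [div_one] at h; exact h
  refine hlim.congr' ?_
  filter_upwards [eventually_ge_atTop 3] with m hm
  have hm3 : (3 : ℝ) ≤ (m : ℝ) := by exact_mod_cast hm
  -- nonvanishing facts
  have h2m : (2 : ℝ) - m ≠ 0 := by linarith
  have hm2 : (m : ℝ) + 2 ≠ 0 := by positivity
  have hm0 : m ≠ 0 := by omega
  have hJpos : 0 < J m := by
    rw [hJ]
    have h1' : (re / R) ^ m < 1 := pow_lt_one₀ (by positivity) ((div_lt_one hR).2 hreR) hm0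
    have h2' : (1 : ℝ) < (R / re) ^ m :=
      one_lt_pow₀ ((one_lt_div hre).2 hreR) hm0
    linarith
  have hDpos : 0 < D m := by
    have : (re ^ 2 / R ^ 2) ^ m < 1 := by
      refine pow_lt_one₀ (by positivity) ?_ hm0
      rw [div_lt_one (by positivity)]; nlinarith
    simp only [hDdef]; linarith
  -- compute the integral
  have hInt : I m = R ^ m * ((b ^ ((2:ℤ) - m) - a ^ ((2:ℤ) - m)) / ((2 : ℝ) - m))
      - (R ^ m)⁻¹ * ((b ^ (m + 2) - a ^ (m + 2)) / ((m : ℝ) + 2)) := by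
    rw [hI]
    have h0uIcc : (0 : ℝ) ∉ Set.uIcc a b := Set.notMem_uIcc_of_lt ha hb
    have hcongr : ∀ s ∈ Set.uIcc a b,
        ((R / s) ^ m - (s / R) ^ m) * s
          = R ^ m * s ^ ((1:ℤ) - m) - (R ^ m)⁻¹ * s ^ ((m:ℤ) + 1) := by
      intro s hs
      rw [Set.uIcc_of_le hab.le] at hs
      have hs0 : 0 < s := lt_of_lt_of_le ha hs.1
      rw [zpow_sub₀ hs0.ne', zpow_one, zpow_natCast, zpow_add₀ hs0.ne', zpow_one,
        zpow_natCast]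
      simp only [div_pow]
      field_simp
    rw [intervalIntegral.integral_congr hcongr]
    rw [intervalIntegral.integral_sub
        (((intervalIntegrable_zpow (Or.inr h0uIcc)).const_mul _))
        (((intervalIntegrable_zpow (Or.inr h0uIcc)).const_mul _)),
      intervalIntegral.integral_const_mul, intervalIntegral.integral_const_mul,
      integral_zpow (Or.inr ⟨by omega, h0uIcc⟩),
      integral_zpow (Or.inl (by positivity))]
    have e1 : (1:ℤ) - m + 1 = 2 - m := by ring
    have e2 : (m:ℤ) + 1 + 1 = (m : ℤ) + 2 := by ring
    rw [e1, e2]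
    have e3 : (b : ℝ) ^ ((m:ℤ) + 2) = b ^ (m + 2) := by
      rw [show ((m:ℤ) + 2) = ((m + 2 : ℕ) : ℤ) by push_cast; ring, zpow_natCast]
    have e4 : (a : ℝ) ^ ((m:ℤ) + 2) = a ^ (m + 2) := by
      rw [show ((m:ℤ) + 2) = ((m + 2 : ℕ) : ℤ) by push_cast; ring, zpow_natCast]
    rw [e3, e4]
    push_cast
    ring
  -- turn the negative powers into divisions
  have hb2 : (b : ℝ) ^ ((2:ℤ) - m) = b ^ 2 / b ^ m := by
    simp [zpow_sub₀ hb.ne', zpow_natCast, zpow_ofNat]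
  have ha2 : (a : ℝ) ^ ((2:ℤ) - m) = a ^ 2 / a ^ m := by
    simp [zpow_sub₀ ha.ne', zpow_natCast, zpow_ofNat]
  rw [hb2, ha2] at hInt
  -- final algebraic identity
  have hJm : J m = (R / re) ^ m - (re / R) ^ m := hJ m
  have hJne : ((R / re) ^ m - (re / R) ^ m) ≠ 0 := by rw [← hJm]; exact hJpos.ne'
  have hDne : (1 : ℝ) - (re ^ 2 / R ^ 2) ^ m ≠ 0 := hDpos.ne'
  rw [hInt, hJm, ← mul_div_assoc]
  simp only [hNdef, hDdef]
  rw [div_eq_div_iff hDne hJne]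
  have hbm : (b:ℝ) ^ m ≠ 0 := by positivity
  have ham : (a:ℝ) ^ m ≠ 0 := by positivity
  have hRm : (R:ℝ) ^ m ≠ 0 := by positivity
  have hrem : (re:ℝ) ^ m ≠ 0 := by positivity
  have hpow2 : b ^ (m + 2) = b ^ m * b ^ 2 := by ring
  have hpow2' : a ^ (m + 2) = a ^ m * a ^ 2 := by ring
  rw [hpow2, hpow2']
  simp only [div_pow, mul_pow]
  field_simp
  ring
end

section
/- Componentwise asymptotics in the proof of Proposition 1.4: let 0 < r_i < r_e ≤ a < b ≤ R be reals. For an integer m ≥ 1 set I_m := ∫_a^b ((R/s)^m − (s/R)^m)·s ds, J_m := (R/r_e)^m − (r_e/R)^m, s_m := (r_e/r_i)^m, E_m := −(1/(2m))·[[r_i·(1 − (r_e²/(r_i·R))^{2m}), r_e·s_m·(1 − (r_e/R)^{2m})], [r_i·s_m·(1 − (r_e/R)^{2m}), r_e·(1 − (r_e/R)^{2m})]], and v_m := E_m·(0, I_m/(r_e·J_m))ᵀ ∈ ℝ². Then lim_{m→∞} −(2m²/a²)·(r_i·a/r_e²)^m·(v_m)₁ = 1 and lim_{m→∞} −(2m²/a²)·(a/r_e)^m·(v_m)₂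 = 1. -/
open Filter Topology intervalIntegral

private lemma integral_eval (a b R : ℝ) (ha : 0 < a) (hab : a < b) (hbR : b ≤ R)
    (m : ℕ) (hm : 3 ≤ m) :
    ∫ s in a..b, ((R / s) ^ m - (s / R) ^ m) * s =
      R ^ m * ((b ^ 2 / b ^ m - a ^ 2 / a ^ m) / ((2 : ℝ) - m))
        - (1 / R ^ m) * ((b ^ (m + 2) - a ^ (m + 2)) / ((m : ℝ) + 2)) := by
  have hb : 0 < b := ha.trans hab
  have hR : 0 < R := hb.trans_le hbR
  have h0 : (0 : ℝ) ∉ Set.uIcc a b := by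
    rw [Set.uIcc_of_le hab.le]
    rintro ⟨h1, -⟩; linarith
  have hcongr : ∀ s ∈ Set.uIcc a b,
      ((R / s) ^ m - (s / R) ^ m) * s
        = R ^ m * s ^ ((1 : ℤ) - m) - (1 / R ^ m) * s ^ (((m : ℤ)) + 1) := by
    intro s hs
    have hs0 : s ≠ 0 := fun h => h0 (h ▸ hs)
    rw [zpow_sub₀ hs0, zpow_one, zpow_natCast, zpow_add₀ hs0, zpow_one, zpow_natCast]
    have hR0 : R ≠ 0 := hR.ne'
    rw [div_pow, div_pow]
    field_simp
  rw [intervalIntegral.integral_congr hcongr]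
  have hint1 : IntervalIntegrable (fun s : ℝ => R ^ m * s ^ ((1 : ℤ) - m)) MeasureTheory.volume a b :=
    (intervalIntegrable_zpow (Or.inr h0)).const_mul _
  have hint2 : IntervalIntegrable (fun s : ℝ => (1 / R ^ m) * s ^ (((m : ℤ)) + 1)) MeasureTheory.volume a b :=
    (intervalIntegrable_zpow (Or.inl (by positivity))).const_mul _
  rw [intervalIntegral.integral_sub hint1 hint2, intervalIntegral.integral_const_mul,
    intervalIntegral.integral_const_mul,
    integral_zpow (Or.inr ⟨by omega, h0⟩), integral_zpow (Or.inl (by positivity))]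
  have h1 : (1 : ℤ) - m + 1 = 2 - (m : ℤ) := by ring
  have h2 : ((m : ℤ)) + 1 + 1 = ((m + 2 : ℕ) : ℤ) := by push_cast; ring
  rw [h1, h2]
  simp only [zpow_natCast]
  have hb0 : b ≠ 0 := hb.ne'
  have ha0 : a ≠ 0 := ha.ne'
  rw [zpow_sub₀ hb0, zpow_sub₀ ha0, zpow_natCast, zpow_natCast, zpow_two, zpow_two]
  push_cast [pow_add]
  ring

/-- Componentwise asymptotics in the proof of Proposition 1.4: with
`v_m = E_m·(0, I_m/(r_e·J_m))ᵀ`, one has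
`-(2m²/a²)·(r_i·a/r_e²)^m·(v_m)₁ → 1` and `-(2m²/a²)·(a/r_e)^m·(v_m)₂ → 1`
as `m → ∞`. -/
theorem stmt_15
    (ri re a b R : ℝ) (hri : 0 < ri) (hrie : ri < re) (hrea : re ≤ a)
    (hab : a < b) (hbR : b ≤ R)
    (I J : ℕ → ℝ)
    (hI : ∀ m : ℕ, I m = ∫ s in a..b, ((R / s) ^ m - (s / R) ^ m) * s)
    (hJ : ∀ m : ℕ, J m = (R / re) ^ m - (re / R) ^ m)
    (E : ℕ → Matrix (Fin 2) (Fin 2) ℝ)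
    (hE : ∀ m : ℕ, 1 ≤ m → E m = -(1 / (2 * (m : ℝ))) •
      !![ri * (1 - (re ^ 2 / (ri * R)) ^ (2 * m)),
           re * (re / ri) ^ m * (1 - (re / R) ^ (2 * m));
         ri * (re / ri) ^ m * (1 - (re / R) ^ (2 * m)),
           re * (1 - (re / R) ^ (2 * m))])
    (v : ℕ → Fin 2 → ℝ)
    (hv : ∀ m : ℕ, 1 ≤ m → v m = (E m).mulVec ![0, I m / (re * J m)]) :
    Filter.Tendsto
        (fun m : ℕ => -(2 * (m : ℝ) ^ 2 / a ^ 2) * (ri * a / re ^ 2) ^ m * v m 0)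
        Filter.atTop (nhds 1) ∧
    Filter.Tendsto
        (fun m : ℕ => -(2 * (m : ℝ) ^ 2 / a ^ 2) * (a / re) ^ m * v m 1)
        Filter.atTop (nhds 1) := by
  have hre : 0 < re := hri.trans hrie
  have ha : 0 < a := hre.trans_le hrea
  have hb : 0 < b := ha.trans hab
  have hR : 0 < R := hb.trans_le hbR
  have haR : a < R := hab.trans_le hbR
  have hreR : re < R := lt_of_le_of_lt hrea haR
  set G : ℕ → ℝ := fun m =>
    (m : ℝ) / ((m : ℝ) - 2)
      - (b ^ 2 / a ^ 2) * ((m : ℝ) / ((m : ℝ) - 2)) * (a / b) ^ m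
      - (b ^ 2 / a ^ 2) * ((m : ℝ) / ((m : ℝ) + 2)) * (a * b / R ^ 2) ^ m
      + ((m : ℝ) / ((m : ℝ) + 2)) * (a ^ 2 / R ^ 2) ^ m with hGdef
  have h1 : Tendsto (fun m : ℕ => (m : ℝ) / ((m : ℝ) - 2)) atTop (𝓝 1) := by
    simpa [sub_eq_add_neg] using tendsto_natCast_div_add_atTop (-2 : ℝ)
  have h2 : Tendsto (fun m : ℕ => (m : ℝ) / ((m : ℝ) + 2)) atTop (𝓝 1) :=
    tendsto_natCast_div_add_atTop (2 : ℝ)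
  have p1 : Tendsto (fun m : ℕ => (a / b) ^ m) atTop (𝓝 0) :=
    tendsto_pow_atTop_nhds_zero_of_lt_one (by positivity) ((div_lt_one hb).2 hab)
  have p2 : Tendsto (fun m : ℕ => (a * b / R ^ 2) ^ m) atTop (𝓝 0) := by
    refine tendsto_pow_atTop_nhds_zero_of_lt_one (by positivity) ?_
    rw [div_lt_one (by positivity)]
    nlinarith
  have p3 : Tendsto (fun m : ℕ => (a ^ 2 / R ^ 2) ^ m) atTop (𝓝 0) := by
    refine tendsto_pow_atTop_nhds_zero_of_lt_one (by positivity) ?_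
    rw [div_lt_one (by positivity)]
    nlinarith
  have hGlim : Tendsto G atTop (𝓝 1) := by
    have := ((h1.sub (((tendsto_const_nhds (x := b ^ 2 / a ^ 2)).mul h1).mul p1)).sub
        (((tendsto_const_nhds (x := b ^ 2 / a ^ 2)).mul h2).mul p2)).add (h2.mul p3)
    simpa using this
  have hkey : ∀ m : ℕ, 3 ≤ m →
      -(2 * (m : ℝ) ^ 2 / a ^ 2) * (ri * a / re ^ 2) ^ m * v m 0 = G m ∧
      -(2 * (m : ℝ) ^ 2 / a ^ 2) * (a / re) ^ m * v m 1 = G m := by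
    intro m hm
    have hm1 : 1 ≤ m := by omega
    have hm0 : (m : ℝ) ≠ 0 := Nat.cast_ne_zero.2 (by omega)
    have hm3 : (3 : ℝ) ≤ (m : ℝ) := by exact_mod_cast hm
    have hm2 : (m : ℝ) - 2 ≠ 0 := by linarith
    have hm2' : (2 : ℝ) - (m : ℝ) ≠ 0 := by linarith
    have hm2'' : (m : ℝ) + 2 ≠ 0 := by positivity
    have hJpos : 0 < J m := by
      rw [hJ]
      have h1' : (re / R) ^ m < 1 := pow_lt_one₀ (by positivity) ((div_lt_one hR).2 hreR) (by omega)
      have h2' : (1 : ℝ) < (R / re) ^ m :=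
        one_lt_pow₀ ((one_lt_div hre).2 hreR) (by omega)
      linarith
    have hJne : J m ≠ 0 := hJpos.ne'
    have hq : (1 : ℝ) - (re / R) ^ (2 * m) = (re / R) ^ m * J m := by
      have hone : (re / R) ^ m * (R / re) ^ m = 1 := by
        rw [← mul_pow, div_mul_div_comm, mul_comm re R, div_self (by positivity), one_pow]
      rw [hJ, mul_sub, hone, ← pow_add, two_mul]
    have hIm : I m = R ^ m * ((b ^ 2 / b ^ m - a ^ 2 / a ^ m) / ((2 : ℝ) - m))
        - (1 / R ^ m) * ((b ^ (m + 2) - a ^ (m + 2)) / ((m : ℝ) + 2)) := by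
      rw [hI]; exact integral_eval a b R ha hab hbR m hm
    have hmid : ((m : ℝ) / a ^ 2) * (a / R) ^ m * I m = G m := by
      rw [hIm, hGdef]
      have ha0 : a ≠ 0 := ha.ne'
      have hb0 : b ≠ 0 := hb.ne'
      have hR0 : R ≠ 0 := hR.ne'
      simp only [div_pow]
      field_simp
      ring
    rw [hv m hm1, hE m hm1]
    simp only [Matrix.mulVec, dotProduct, Fin.sum_univ_two, Matrix.smul_apply,
      Matrix.cons_val', Matrix.cons_val_zero, Matrix.cons_val_one, Matrix.head_cons,
      Matrix.head_fin_const, Matrix.empty_val', Matrix.cons_val_fin_one, smul_eq_mul,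
      Matrix.neg_apply, neg_mul, mul_zero, zero_add, Matrix.of_apply]
    rw [hq]
    have hri0 : ri ≠ 0 := hri.ne'
    have hre0 : re ≠ 0 := hre.ne'
    have hR0 : R ≠ 0 := hR.ne'
    constructor
    · rw [← hmid]
      simp only [div_pow]
      field_simp
      ring
    · rw [← hmid]
      simp only [div_pow]
      field_simp
      ring
  constructor
  · exact hGlim.congr' (eventually_atTop.2 ⟨3, fun m hm => ((hkey m hm).1).symm⟩)
  · exact hGlim.congr' (eventually_atTop.2 ⟨3, fun m hm => ((hkey m hm).2).symm⟩)
end
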